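/- Under the perturbed preconditioned Cholesky-QR model, if κ(A₁)²γ₂ < 1 where γ₂ ≡ 2ε_F + ε_F² + (1+ε_F)²(ε₁ + (1+ε₁)ε₂) and ε_F ≡ (ε_A + ε_s)κ(R_s), and if Ĝ₁ + E₂ = R̂₂ᵀR̂₂ with R̂₂ ∈ ℝ^{n×n}, then R̂₂ is nonsingular, ‖R̂₂‖₂² ≤ ‖A₁‖₂²(1+γ₂), ‖R̂₂⁻¹‖₂² ≤ ‖A₁†‖₂²/(1 − κ(A₁)²γ₂), and κ(R̂₂) ≤ κ(A₁) · sqrt((1+γ₂)/(1 − κ(A₁)²γ₂)). -/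

import Mathlib

open Matrix

/-- Spectral (two-)norm of a real matrix. -/
noncomputable def spec {m n : ℕ} (M : Matrix (Fin m) (Fin n) ℝ) : ℝ :=
  ‖LinearMap.toContinuousLinearMap (Matrix.toEuclideanLin M)‖

/-- Singular values of a real `m × n` matrix, in decreasing order:
`singularValues M i` is `σ_{i+1}(M)` (0-based). -/
noncomputable def singularValues {m n : ℕ} (M : Matrix (Fin m) (Fin n) ℝ) : Fin n → ℝ :=
  fun i =>
    Real.sqrt (((show (Mᵀ * M).IsHermitian by
        simpa using Matrix.isHermitian_conjTranspose_mul_self M).eigenvalues ∘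
      ⇑(Tuple.sort (show (Mᵀ * M).IsHermitian by
        simpa using Matrix.isHermitian_conjTranspose_mul_self M).eigenvalues)) i.rev)

/-- Two-norm condition number `κ(M) = σ₁(M)/σₙ(M)`. -/
noncomputable def kappa {m n : ℕ} (M : Matrix (Fin m) (Fin n) ℝ) : ℝ :=
  if h : 0 < n then
    singularValues M ⟨0, h⟩ / singularValues M ⟨n - 1, Nat.sub_lt h Nat.one_pos⟩
  else 1

/-- Smallest singular value `σₙ(M)`. -/
noncomputable def sigmaMin {m n : ℕ} (M : Matrix (Fin m) (Fin n) ℝ) : ℝ :=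
  if h : 0 < n then singularValues M ⟨n - 1, Nat.sub_lt h Nat.one_pos⟩ else 1

/-- Eigenvalues of a real symmetric matrix in decreasing order:
`symmEigs M j` is `λ_{j+1}(M)` (0-based). -/
noncomputable def symmEigs {n : ℕ} (M : Matrix (Fin n) (Fin n) ℝ) : Fin n → ℝ :=
  fun j =>
    if h : M.IsHermitian then (h.eigenvalues ∘ ⇑(Tuple.sort h.eigenvalues)) j.rev else 0
open scoped Matrix.Norms.L2Operator InnerProductSpace


lemma spec_eq_norm {m n : ℕ} (M : Matrix (Fin m) (Fin n) ℝ) : spec M = ‖M‖ := rfl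

noncomputable def CLMx {m n : ℕ} (M : Matrix (Fin m) (Fin n) ℝ) :
    EuclideanSpace ℝ (Fin n) →L[ℝ] EuclideanSpace ℝ (Fin m) :=
  LinearMap.toContinuousLinearMap (Matrix.toEuclideanLin M)

lemma spec_eq_opNorm {m n : ℕ} (M : Matrix (Fin m) (Fin n) ℝ) : spec M = ‖CLMx M‖ := rfl

lemma clm_mul {l m n : ℕ} (A : Matrix (Fin l) (Fin m) ℝ) (B : Matrix (Fin m) (Fin n) ℝ)
    (x : EuclideanSpace ℝ (Fin n)) : CLMx (A * B) x = CLMx A (CLMx B x) := by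
  simp [CLMx, Matrix.toEuclideanLin_apply, Matrix.mulVec_mulVec]

lemma clm_one {n : ℕ} (x : EuclideanSpace ℝ (Fin n)) : CLMx (1 : Matrix (Fin n) (Fin n) ℝ) x = x := by
  simp [CLMx, Matrix.toEuclideanLin_apply]

lemma inner_clm_transpose {m n : ℕ} (M : Matrix (Fin m) (Fin n) ℝ)
    (x : EuclideanSpace ℝ (Fin n)) (y : EuclideanSpace ℝ (Fin m)) :
    ⟪x, CLMx Mᵀ y⟫_ℝ = ⟪CLMx M x, y⟫_ℝ := by
  have h : Mᵀ = Mᴴ := (Matrix.conjTranspose_eq_transpose_of_trivial M).symm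
  rw [h]
  show ⟪x, Matrix.toEuclideanLin Mᴴ y⟫_ℝ = _
  rw [Matrix.toEuclideanLin_conjTranspose_eq_adjoint]
  exact LinearMap.adjoint_inner_right _ _ _

lemma norm_clm_sq {m n : ℕ} (M : Matrix (Fin m) (Fin n) ℝ) (x : EuclideanSpace ℝ (Fin n)) :
    ⟪x, CLMx (Mᵀ * M) x⟫_ℝ = ‖CLMx M x‖ ^ 2 := by
  rw [clm_mul, inner_clm_transpose, real_inner_self_eq_norm_sq]

section Eigen
variable {m n : ℕ} (M : Matrix (Fin m) (Fin n) ℝ)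

noncomputable def hHM : (Mᵀ * M).IsHermitian := by
  simpa using Matrix.isHermitian_conjTranspose_mul_self M
noncomputable def ebM := (hHM M).eigenvectorBasis
noncomputable def evM := (hHM M).eigenvalues

lemma clm_eigen (i : Fin n) : CLMx (Mᴴ * M) (ebM M i) = evM M i • ebM M i := by
  have h := (hHM M).mulVec_eigenvectorBasis i
  apply (WithLp.equiv 2 _).injective
  ext j
  have := congrFun h j
  simpa [CLMx, Matrix.toEuclideanLin_apply, ebM, evM] using this

lemma repr_clm (x : EuclideanSpace ℝ (Fin n)) (i : Fin n) :
    (ebM M).repr (CLMx (Mᴴ * M) x) i = evM M i * (ebM M).repr x i := by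
  rw [OrthonormalBasis.repr_apply_apply, OrthonormalBasis.repr_apply_apply]
  have hsym : (Matrix.toEuclideanLin (Mᴴ * M)).IsSymmetric :=
    Matrix.isHermitian_iff_isSymmetric.1 (hHM M)
  have h1 : ⟪ebM M i, CLMx (Mᴴ * M) x⟫_ℝ = ⟪CLMx (Mᴴ * M) (ebM M i), x⟫_ℝ := by
    exact (hsym (ebM M i) x).symm
  rw [h1, clm_eigen, real_inner_smul_left]

lemma inner_quad (x : EuclideanSpace ℝ (Fin n)) :
    ⟪x, CLMx (Mᴴ * M) x⟫_ℝ = ∑ i, evM M i * ((ebM M).repr x i) ^ 2 := by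
  have h := (ebM M).repr.inner_map_map x (CLMx (Mᴴ * M) x)
  rw [← h]
  rw [PiLp.inner_apply]
  refine Finset.sum_congr rfl fun i _ => ?_
  rw [repr_clm]
  simp [RCLike.inner_apply]
  ring

lemma norm_sq_repr (x : EuclideanSpace ℝ (Fin n)) :
    ‖x‖ ^ 2 = ∑ i, ((ebM M).repr x i) ^ 2 := by
  rw [← real_inner_self_eq_norm_sq, ← (ebM M).repr.inner_map_map x x, PiLp.inner_apply]
  refine Finset.sum_congr rfl fun i _ => ?_
  simp [RCLike.inner_apply]

lemma evM_nonneg (i : Fin n) : 0 ≤ evM M i := by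
  have h : Mᴴ = Mᵀ := Matrix.conjTranspose_eq_transpose_of_trivial M
  have h2 := norm_clm_sq M (ebM M i)
  rw [← h] at h2
  have h3 : CLMx (Mᴴ * M) (ebM M i) = evM M i • ebM M i := clm_eigen M i
  rw [h3, real_inner_smul_right, real_inner_self_eq_norm_sq, (ebM M).orthonormal.1 i] at h2
  simp at h2
  rw [h2]
  positivity

noncomputable def gM := evM M ∘ ⇑(Tuple.sort (evM M))

lemma ev_le_top (hn : 0 < n) (i : Fin n) :
    evM M i ≤ gM M ⟨n - 1, Nat.sub_lt hn Nat.one_pos⟩ := by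
  have h1 : evM M i = gM M ((Tuple.sort (evM M))⁻¹ i) := by
    simp [gM]
  rw [h1]
  refine Tuple.monotone_sort (evM M) ?_
  have h2 := ((Tuple.sort (evM M))⁻¹ i).isLt
  exact Fin.le_def.mpr (by simp; omega)

lemma bot_le_ev (hn : 0 < n) (i : Fin n) :
    gM M ⟨0, hn⟩ ≤ evM M i := by
  have h1 : evM M i = gM M ((Tuple.sort (evM M))⁻¹ i) := by simp [gM]
  rw [h1]
  exact Tuple.monotone_sort (evM M) (Fin.le_def.mpr (by simp))

lemma sv_top_eq (hn : 0 < n) :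
    singularValues M ⟨0, hn⟩ = Real.sqrt (gM M ⟨n - 1, Nat.sub_lt hn Nat.one_pos⟩) := by
  unfold singularValues
  have : (⟨0, hn⟩ : Fin n).rev = ⟨n - 1, Nat.sub_lt hn Nat.one_pos⟩ := by
    apply Fin.ext; simp [Fin.val_rev]
  rw [this]; rfl

lemma sv_bot_eq (hn : 0 < n) :
    singularValues M ⟨n - 1, Nat.sub_lt hn Nat.one_pos⟩ = Real.sqrt (gM M ⟨0, hn⟩) := by
  unfold singularValues
  have : (⟨n - 1, Nat.sub_lt hn Nat.one_pos⟩ : Fin n).rev = ⟨0, hn⟩ := by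
    apply Fin.ext; simp [Fin.val_rev]; omega
  rw [this]; rfl

lemma quad_upper (hn : 0 < n) (x : EuclideanSpace ℝ (Fin n)) :
    ⟪x, CLMx (Mᴴ * M) x⟫_ℝ ≤ gM M ⟨n - 1, Nat.sub_lt hn Nat.one_pos⟩ * ‖x‖ ^ 2 := by
  rw [inner_quad, norm_sq_repr M x, Finset.mul_sum]
  refine Finset.sum_le_sum fun i _ => ?_
  have := ev_le_top M hn i
  nlinarith [sq_nonneg ((ebM M).repr x i)]

lemma quad_lower (hn : 0 < n) (x : EuclideanSpace ℝ (Fin n)) :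
    gM M ⟨0, hn⟩ * ‖x‖ ^ 2 ≤ ⟪x, CLMx (Mᴴ * M) x⟫_ℝ := by
  rw [inner_quad, norm_sq_repr M x, Finset.mul_sum]
  refine Finset.sum_le_sum fun i _ => ?_
  have := bot_le_ev M hn i
  nlinarith [sq_nonneg ((ebM M).repr x i)]

lemma gM_nonneg (j : Fin n) : 0 ≤ gM M j := evM_nonneg M _

lemma norm_clm_sq' (x : EuclideanSpace ℝ (Fin n)) :
    ⟪x, CLMx (Mᴴ * M) x⟫_ℝ = ‖CLMx M x‖ ^ 2 := by
  rw [Matrix.conjTranspose_eq_transpose_of_trivial]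
  exact norm_clm_sq M x

lemma exists_unit_sq (j : Fin n) :
    ∃ x : EuclideanSpace ℝ (Fin n), ‖x‖ = 1 ∧ ‖CLMx M x‖ ^ 2 = gM M j := by
  refine ⟨ebM M (Tuple.sort (evM M) j), (ebM M).orthonormal.1 _, ?_⟩
  rw [← norm_clm_sq', clm_eigen, real_inner_smul_right, real_inner_self_eq_norm_sq,
    (ebM M).orthonormal.1]
  simp [gM]

lemma spec_eq_sv_top (hn : 0 < n) : spec M = singularValues M ⟨0, hn⟩ := by
  rw [sv_top_eq M hn]
  set g := gM M ⟨n - 1, Nat.sub_lt hn Nat.one_pos⟩ with hg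
  have hg0 : 0 ≤ g := gM_nonneg M _
  refine le_antisymm ?_ ?_
  · rw [spec_eq_opNorm]
    refine ContinuousLinearMap.opNorm_le_bound _ (Real.sqrt_nonneg _) fun x => ?_
    have h1 : ‖CLMx M x‖ ^ 2 ≤ g * ‖x‖ ^ 2 := by
      rw [← norm_clm_sq']; exact quad_upper M hn x
    have h2 : ‖CLMx M x‖ = Real.sqrt (‖CLMx M x‖ ^ 2) := (Real.sqrt_sq (norm_nonneg _)).symm
    rw [h2]
    calc Real.sqrt (‖CLMx M x‖ ^ 2) ≤ Real.sqrt (g * ‖x‖ ^ 2) := Real.sqrt_le_sqrt h1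
      _ = Real.sqrt g * ‖x‖ := by
          rw [Real.sqrt_mul hg0, Real.sqrt_sq (norm_nonneg _)]
  · obtain ⟨x, hx1, hx2⟩ := exists_unit_sq M ⟨n - 1, Nat.sub_lt hn Nat.one_pos⟩
    have h3 : ‖CLMx M x‖ = Real.sqrt g := by
      rw [hg, ← hx2, Real.sqrt_sq (norm_nonneg _)]
    have h4 := (CLMx M).le_opNorm x
    rw [hx1, mul_one, h3] at h4
    exact h4

lemma sigmaMin_mul_le (hn : 0 < n) (x : EuclideanSpace ℝ (Fin n)) :
    sigmaMin M * ‖x‖ ≤ ‖CLMx M x‖ := by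
  rw [sigmaMin, dif_pos hn, sv_bot_eq M hn]
  have h1 : gM M ⟨0, hn⟩ * ‖x‖ ^ 2 ≤ ‖CLMx M x‖ ^ 2 := by
    rw [← norm_clm_sq']; exact quad_lower M hn x
  have := Real.sqrt_le_sqrt h1
  rw [Real.sqrt_mul (gM_nonneg M _), Real.sqrt_sq (norm_nonneg _),
    Real.sqrt_sq (norm_nonneg _)] at this
  exact this

lemma exists_sigmaMin (hn : 0 < n) :
    ∃ x : EuclideanSpace ℝ (Fin n), ‖x‖ = 1 ∧ ‖CLMx M x‖ = sigmaMin M := by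
  obtain ⟨x, hx1, hx2⟩ := exists_unit_sq M ⟨0, hn⟩
  refine ⟨x, hx1, ?_⟩
  rw [sigmaMin, dif_pos hn, sv_bot_eq M hn, ← hx2, Real.sqrt_sq (norm_nonneg _)]

lemma sigmaMin_nonneg' (hn : 0 < n) : 0 ≤ sigmaMin M := by
  rw [sigmaMin, dif_pos hn, sv_bot_eq M hn]; exact Real.sqrt_nonneg _

lemma kappa_eq_div (hn : 0 < n) : kappa M = spec M / sigmaMin M := by
  rw [kappa, dif_pos hn, spec_eq_sv_top M hn, sigmaMin, dif_pos hn]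

end Eigen

section Util
variable {m n : ℕ}

lemma spec_nonneg (M : Matrix (Fin m) (Fin n) ℝ) : 0 ≤ spec M := norm_nonneg _

lemma spec_add_le (A B : Matrix (Fin m) (Fin n) ℝ) : spec (A + B) ≤ spec A + spec B := by
  simp only [spec_eq_norm]; exact norm_add_le _ _

lemma spec_mul_le {l : ℕ} (A : Matrix (Fin m) (Fin n) ℝ) (B : Matrix (Fin n) (Fin l) ℝ) :
    spec (A * B) ≤ spec A * spec B := by
  simp only [spec_eq_norm]; exact Matrix.l2_opNorm_mul A B

lemma spec_transpose (M : Matrix (Fin m) (Fin n) ℝ) : spec Mᵀ = spec M := by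
  simp only [spec_eq_norm]
  rw [← Matrix.conjTranspose_eq_transpose_of_trivial]
  exact Matrix.l2_opNorm_conjTranspose M

lemma spec_neg (M : Matrix (Fin m) (Fin n) ℝ) : spec (-M) = spec M := by
  simp only [spec_eq_norm]; exact norm_neg M

lemma spec_pos_of_ne_zero {M : Matrix (Fin m) (Fin n) ℝ} (h : M ≠ 0) : 0 < spec M := by
  rw [spec_eq_norm]; exact norm_pos_iff.mpr h

lemma spec_eq_zero_iff {M : Matrix (Fin m) (Fin n) ℝ} : spec M = 0 ↔ M = 0 := by
  rw [spec_eq_norm]; exact norm_eq_zero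

lemma spec_cstar (M : Matrix (Fin m) (Fin n) ℝ) : spec (Mᵀ * M) = spec M ^ 2 := by
  simp only [spec_eq_norm]
  rw [← Matrix.conjTranspose_eq_transpose_of_trivial, sq]
  exact Matrix.l2_opNorm_conjTranspose_mul_self M

lemma rank_inj {A : Matrix (Fin m) (Fin n) ℝ} (hA : A.rank = n) :
    Function.Injective A.mulVecLin := by
  rw [← LinearMap.ker_eq_bot]
  have h1 := LinearMap.finrank_range_add_finrank_ker A.mulVecLin
  rw [Module.finrank_fintype_fun_eq_card, Fintype.card_fin] at h1
  have h2 : A.rank = Module.finrank ℝ (LinearMap.range A.mulVecLin) := rfl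
  rw [← Submodule.finrank_eq_zero (R := ℝ)]
  omega

lemma clm_sub (P Q : Matrix (Fin m) (Fin n) ℝ) (x : EuclideanSpace ℝ (Fin n)) :
    CLMx (P - Q) x = CLMx P x - CLMx Q x := by
  apply (WithLp.equiv 2 _).injective
  simp [CLMx, Matrix.toEuclideanLin_apply, Matrix.sub_mulVec]

lemma isUnit_det_of_lower {M : Matrix (Fin n) (Fin n) ℝ} {c : ℝ} (hc : 0 < c)
    (h : ∀ x : EuclideanSpace ℝ (Fin n), c * ‖x‖ ≤ ‖CLMx M x‖) : IsUnit M.det := by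
  rw [isUnit_iff_ne_zero]
  intro hdet
  obtain ⟨v, hv, hv0⟩ := (Matrix.exists_mulVec_eq_zero_iff).mpr hdet
  set x : EuclideanSpace ℝ (Fin n) := (WithLp.equiv 2 _).symm v with hx
  have hxne : x ≠ 0 := by
    simpa [hx] using hv
  have h2 : CLMx M x = 0 := by
    show (WithLp.equiv 2 _).symm (M *ᵥ (WithLp.equiv 2 _) x) = 0
    simp [hx, hv0]
  have := h x
  rw [h2] at this
  simp at this
  have hxpos : 0 < ‖x‖ := norm_pos_iff.mpr hxne
  nlinarith

end Util

lemma le_of_sq_le_sq'' {a b : ℝ} (ha : 0 ≤ a) (hb : 0 ≤ b) (h : a ^ 2 ≤ b ^ 2) : a ≤ b := by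
  have h2 := Real.sqrt_le_sqrt h
  rwa [Real.sqrt_sq ha, Real.sqrt_sq hb] at h2

lemma one_le_sqrt_aux {x : ℝ} (hx : 1 ≤ x) : 1 ≤ Real.sqrt x := by
  rw [show (1:ℝ) = Real.sqrt 1 by simp]
  exact Real.sqrt_le_sqrt hx

set_option maxHeartbeats 2000000 in
/-- proof of Theorem 3.2, step 5: bounds on the computed Cholesky
factor `R̂₂`. Since `A₁` has full column rank, `‖A₁†‖₂ = 1/σₙ(A₁) = (sigmaMin A₁)⁻¹`. -/
theorem stmt_12 {m n : ℕ} (A E Es : Matrix (Fin m) (Fin n) ℝ)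
    (Rs : Matrix (Fin n) (Fin n) ℝ)
    (hA : A.rank = n) (hRs : IsUnit Rs.det)
    (A₁ Ahat : Matrix (Fin m) (Fin n) ℝ)
    (hA₁ : A₁ = A * Rs⁻¹)
    (hAhat : Ahat = ((A + E) + Es) * Rs⁻¹)
    (E₁ E₂ Ghat Rhat₂ : Matrix (Fin n) (Fin n) ℝ)
    (hE₁ : E₁ᵀ = E₁) (hE₂ : E₂ᵀ = E₂)
    (hGhat : Ghat = Ahatᵀ * Ahat + E₁)
    (εA εs εF ε₁ ε₂ γ₂ : ℝ)
    (hεA : εA = spec E / spec A)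
    (hεs : εs = spec Es / (spec A₁ * spec Rs))
    (hεF : εF = (εA + εs) * (spec Rs * spec Rs⁻¹))
    (hε₁ : ε₁ = spec E₁ / spec Ahat ^ 2)
    (hε₂ : ε₂ = spec E₂ / spec Ghat)
    (hγ₂ : γ₂ = 2 * εF + εF ^ 2 + (1 + εF) ^ 2 * (ε₁ + (1 + ε₁) * ε₂))
    (hsmall : kappa A₁ ^ 2 * γ₂ < 1)
    (hchol : Ghat + E₂ = Rhat₂ᵀ * Rhat₂) :
    IsUnit Rhat₂.det ∧
      spec Rhat₂ ^ 2 ≤ spec A₁ ^ 2 * (1 + γ₂) ∧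
      spec Rhat₂⁻¹ ^ 2 ≤ ((sigmaMin A₁)⁻¹) ^ 2 / (1 - kappa A₁ ^ 2 * γ₂) ∧
      kappa Rhat₂ ≤ kappa A₁ * Real.sqrt ((1 + γ₂) / (1 - kappa A₁ ^ 2 * γ₂)) := by
  -- nonnegativity of the epsilons
  have hεA0 : 0 ≤ εA := hεA ▸ div_nonneg (spec_nonneg _) (spec_nonneg _)
  have hεs0 : 0 ≤ εs := hεs ▸ div_nonneg (spec_nonneg _) (mul_nonneg (spec_nonneg _) (spec_nonneg _))
  have hεF0 : 0 ≤ εF := hεF ▸ mul_nonneg (by linarith) (mul_nonneg (spec_nonneg _) (spec_nonneg _))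
  have hε₁0 : 0 ≤ ε₁ := hε₁ ▸ div_nonneg (spec_nonneg _) (by positivity)
  have hε₂0 : 0 ≤ ε₂ := hε₂ ▸ div_nonneg (spec_nonneg _) (spec_nonneg _)
  have hγ0 : 0 ≤ γ₂ := by
    have h1 : 0 ≤ ε₁ + (1 + ε₁) * ε₂ := by nlinarith
    have h2 : 0 ≤ (1 + εF) ^ 2 := sq_nonneg _
    nlinarith [mul_nonneg h2 h1]
  rcases Nat.eq_zero_or_pos n with hn0 | hn
  · subst hn0
    have hR0 : Rhat₂ = 0 := Subsingleton.elim _ _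
    have hRi0 : Rhat₂⁻¹ = 0 := Subsingleton.elim _ _
    have hkA : kappa A₁ = 1 := by rw [kappa, dif_neg (by omega)]
    have hkR : kappa Rhat₂ = 1 := by rw [kappa, dif_neg (by omega)]
    have hsA : sigmaMin A₁ = 1 := by rw [sigmaMin, dif_neg (by omega)]
    rw [hkA] at hsmall
    have hγlt : γ₂ < 1 := by nlinarith
    refine ⟨?_, ?_, ?_, ?_⟩
    · rw [Matrix.det_isEmpty]; exact isUnit_one
    · have h0 : spec Rhat₂ = 0 := spec_eq_zero_iff.mpr hR0
      rw [h0]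
      calc (0:ℝ) ^ 2 = 0 := by norm_num
        _ ≤ spec A₁ ^ 2 * (1 + γ₂) :=
            mul_nonneg (pow_nonneg (spec_nonneg _) 2) (by linarith)
    · have h0 : spec Rhat₂⁻¹ = 0 := spec_eq_zero_iff.mpr hRi0
      rw [h0, hsA, hkA]
      have hd : (0:ℝ) < 1 - 1 ^ 2 * γ₂ := by rw [one_pow, one_mul]; linarith
      have : (0:ℝ) ^ 2 = 0 := by norm_num
      rw [this]
      exact div_nonneg (by norm_num) hd.le
    · rw [hkR, hkA, one_mul]
      apply one_le_sqrt_aux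
      rw [one_pow, le_div_iff₀ (by linarith)]
      linarith
  · -- main case: n > 0
    set S := spec A₁ with hS
    set s := sigmaMin A₁ with hsdef
    -- basic invertibility facts for Rs
    have hRsl : Rs⁻¹ * Rs = 1 := Matrix.nonsing_inv_mul Rs hRs
    have hRsr : Rs * Rs⁻¹ = 1 := Matrix.mul_nonsing_inv Rs hRs
    have hA1Rs : A₁ * Rs = A := by
      rw [hA₁, Matrix.mul_assoc, hRsl, Matrix.mul_one]
    -- injectivity of A and A₁
    have hAinj : ∀ v : Fin n → ℝ, A *ᵥ v = 0 → v = 0 := by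
      intro v hv
      have := rank_inj hA (a₁ := v) (a₂ := 0) (by simpa using hv)
      simpa using this
    have hA1inj : ∀ v : Fin n → ℝ, A₁ *ᵥ v = 0 → v = 0 := by
      intro v hv
      rw [hA₁] at hv
      have h1 : A *ᵥ (Rs⁻¹ *ᵥ v) = 0 := by
        rwa [Matrix.mulVec_mulVec]
      have h2 := hAinj _ h1
      have h3 : Rs *ᵥ (Rs⁻¹ *ᵥ v) = v := by
        rw [Matrix.mulVec_mulVec, hRsr, Matrix.one_mulVec]
      rw [h2, Matrix.mulVec_zero] at h3
      exact h3.symm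
    -- positivity of the smallest singular value of A₁
    obtain ⟨x₀, hx₀n, hx₀v⟩ := exists_sigmaMin A₁ hn
    have hs0 : 0 ≤ s := sigmaMin_nonneg' A₁ hn
    have hs_pos : 0 < s := by
      rcases lt_or_eq_of_le hs0 with h | h
      · exact h
      · exfalso
        have hz : CLMx A₁ x₀ = 0 := by
          have : ‖CLMx A₁ x₀‖ = 0 := by rw [hx₀v]; exact h.symm
          exact norm_eq_zero.mp this
        have hv : A₁ *ᵥ (WithLp.equiv 2 _ x₀) = 0 := by
          have := congrArg (WithLp.equiv 2 _) hz
          simpa [CLMx, Matrix.toEuclideanLin_apply] using this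
        have := hA1inj _ hv
        have hx0 : x₀ = 0 := by
          apply (WithLp.equiv 2 _).injective
          simpa using this
        rw [hx0, norm_zero] at hx₀n
        norm_num at hx₀n
    have hSs : s ≤ S := by
      have h1 := (CLMx A₁).le_opNorm x₀
      rw [hx₀n, mul_one, hx₀v] at h1
      exact h1.trans_eq (spec_eq_opNorm A₁).symm
    have hS_pos : 0 < S := lt_of_lt_of_le hs_pos hSs
    have hκ : kappa A₁ = S / s := kappa_eq_div A₁ hn
    have hκ1 : 1 ≤ kappa A₁ := by
      rw [hκ]; rw [le_div_iff₀ hs_pos]; linarith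
    have hκ2 : 1 ≤ kappa A₁ ^ 2 := by
      have h2 := mul_le_mul hκ1 hκ1 zero_le_one (le_trans zero_le_one hκ1)
      rw [one_mul] at h2
      rw [pow_two]
      exact h2
    -- spec A positive
    have hA1ne : A₁ ≠ 0 := by
      intro h
      rw [hS, h, spec_eq_norm, norm_zero] at hS_pos
      exact lt_irrefl _ hS_pos
    have hAne : A ≠ 0 := by
      intro h
      apply hA1ne
      rw [hA₁, h, Matrix.zero_mul]
    have hA_pos : 0 < spec A := spec_pos_of_ne_zero hAne
    have hone : (1 : Matrix (Fin n) (Fin n) ℝ) ≠ 0 := by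
      intro h
      have h2 := congrFun (congrFun h ⟨0, hn⟩) ⟨0, hn⟩
      simp [Matrix.one_apply] at h2
    have hRsne : Rs ≠ 0 := by
      intro h
      rw [h, Matrix.mul_zero] at hRsl
      exact hone hRsl.symm
    have hRsine : Rs⁻¹ ≠ 0 := by
      intro h
      rw [h, Matrix.zero_mul] at hRsl
      exact hone hRsl.symm
    have hRs_pos : 0 < spec Rs := spec_pos_of_ne_zero hRsne
    have hRsi_pos : 0 < spec Rs⁻¹ := spec_pos_of_ne_zero hRsine
    have hspecA_le : spec A ≤ S * spec Rs := by
      rw [← hA1Rs]; exact spec_mul_le A₁ Rs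
    have hE : spec E = εA * spec A := by
      rw [hεA]; field_simp
    have hEs : spec Es = εs * (S * spec Rs) := by
      rw [hεs]; field_simp
    -- the perturbation F
    obtain ⟨F, hFdef⟩ : ∃ F : Matrix (Fin m) (Fin n) ℝ, F = (E + Es) * Rs⁻¹ := ⟨_, rfl⟩
    have hAh : Ahat = A₁ + F := by
      rw [hAhat, hA₁, hFdef, Matrix.add_mul, Matrix.add_mul, Matrix.add_mul]; abel
    have hFb : spec F ≤ εF * S := by
      rw [hFdef]
      have c1 : spec ((E + Es) * Rs⁻¹) ≤ spec (E + Es) * spec Rs⁻¹ := spec_mul_le _ _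
      have c2 : spec (E + Es) ≤ spec E + spec Es := spec_add_le _ _
      have c3 : spec E ≤ εA * (S * spec Rs) := by
        rw [hE]; exact mul_le_mul_of_nonneg_left hspecA_le hεA0
      have c4 : spec (E + Es) * spec Rs⁻¹ ≤ ((εA + εs) * (S * spec Rs)) * spec Rs⁻¹ := by
        apply mul_le_mul_of_nonneg_right _ (spec_nonneg _)
        rw [hEs] at c2
        linarith [c2, c3]
      calc spec ((E + Es) * Rs⁻¹) ≤ spec (E + Es) * spec Rs⁻¹ := c1
        _ ≤ ((εA + εs) * (S * spec Rs)) * spec Rs⁻¹ := c4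
        _ = εF * S := by rw [hεF]; ring
    have hAhb : spec Ahat ≤ (1 + εF) * S := by
      rw [hAh]
      calc spec (A₁ + F) ≤ spec A₁ + spec F := spec_add_le _ _
        _ ≤ S + εF * S := by rw [← hS]; linarith [hFb]
        _ = (1 + εF) * S := by ring
    -- degenerate case: Ahat = 0
    by_cases hAh0 : Ahat = 0
    · exfalso
      have hFA : F = -A₁ := by
        have : A₁ + F = 0 := by rw [← hAh, hAh0]
        linear_combination (norm := abel) this
      have hsF : spec F = S := by rw [hFA, spec_neg, hS]
      have hεF1 : 1 ≤ εF := by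
        rw [hsF] at hFb
        exact le_of_mul_le_mul_right (by linarith) hS_pos
      have hq : (0:ℝ) ≤ ε₁ + (1 + ε₁) * ε₂ := add_nonneg hε₁0 (mul_nonneg (by linarith) hε₂0)
      have hq2 : (0:ℝ) ≤ (1 + εF) ^ 2 * (ε₁ + (1 + ε₁) * ε₂) := mul_nonneg (sq_nonneg _) hq
      have hsq : (0:ℝ) ≤ εF ^ 2 := sq_nonneg εF
      have hγ2' : 2 ≤ γ₂ := by linarith
      have : γ₂ ≤ kappa A₁ ^ 2 * γ₂ := le_mul_of_one_le_left hγ0 hκ2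
      linarith
    have hAh_pos : 0 < spec Ahat := spec_pos_of_ne_zero hAh0
    have hE₁eq : spec E₁ = ε₁ * spec Ahat ^ 2 := by
      rw [hε₁]; field_simp
    have hE₁b : spec E₁ ≤ ε₁ * ((1 + εF) * S) ^ 2 := by
      rw [hE₁eq]
      exact mul_le_mul_of_nonneg_left (pow_le_pow_left₀ (spec_nonneg _) hAhb 2) hε₁0
    -- degenerate case: Ghat = 0
    by_cases hG0 : Ghat = 0
    · exfalso
      have hE₁A : E₁ = -(Ahatᵀ * Ahat) := by
        have : Ahatᵀ * Ahat + E₁ = 0 := by rw [← hGhat, hG0]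
        linear_combination (norm := abel) this
      have hsE₁ : spec E₁ = spec Ahat ^ 2 := by
        rw [hE₁A, spec_neg, spec_cstar]
      have hε₁1 : ε₁ = 1 := by
        rw [hε₁, hsE₁]
        field_simp
      have h1 : 1 ≤ (1 + εF) ^ 2 := by
        have h2 := mul_le_mul (by linarith : (1:ℝ) ≤ 1 + εF) (by linarith : (1:ℝ) ≤ 1 + εF) zero_le_one (by linarith)
        rw [one_mul] at h2
        rw [pow_two]; exact h2
      have h2 : 1 ≤ ε₁ + (1 + ε₁) * ε₂ := by
        rw [hε₁1]
        have : 0 ≤ (1 + (1:ℝ)) * ε₂ := mul_nonneg (by norm_num) hε₂0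
        linarith
      have h3 : 1 ≤ (1 + εF) ^ 2 * (ε₁ + (1 + ε₁) * ε₂) := by
        have h4 := mul_le_mul h1 h2 zero_le_one (by linarith)
        rw [one_mul] at h4
        linarith
      have hγ1 : 1 ≤ γ₂ := by
        have hsq : (0:ℝ) ≤ εF ^ 2 := sq_nonneg εF
        linarith
      have : γ₂ ≤ kappa A₁ ^ 2 * γ₂ := le_mul_of_one_le_left hγ0 hκ2
      linarith
    have hG_pos : 0 < spec Ghat := spec_pos_of_ne_zero hG0
    have hE₂eq : spec E₂ = ε₂ * spec Ghat := by
      rw [hε₂]; field_simp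
    have hGb : spec Ghat ≤ (1 + ε₁) * ((1 + εF) * S) ^ 2 := by
      rw [hGhat]
      calc spec (Ahatᵀ * Ahat + E₁) ≤ spec (Ahatᵀ * Ahat) + spec E₁ := spec_add_le _ _
        _ = spec Ahat ^ 2 + spec E₁ := by rw [spec_cstar]
        _ ≤ ((1 + εF) * S) ^ 2 + ε₁ * ((1 + εF) * S) ^ 2 := by
            have := pow_le_pow_left₀ (spec_nonneg Ahat) hAhb 2
            linarith [hE₁b]
        _ = (1 + ε₁) * ((1 + εF) * S) ^ 2 := by ring
    have hE₂b : spec E₂ ≤ ε₂ * ((1 + ε₁) * ((1 + εF) * S) ^ 2) := by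
      rw [hE₂eq]
      exact mul_le_mul_of_nonneg_left hGb hε₂0
    -- the total perturbation bound
    have hexp : Ahatᵀ * Ahat = A₁ᵀ * A₁ + (A₁ᵀ * F + Fᵀ * A₁ + Fᵀ * F) := by
      rw [hAh, Matrix.transpose_add, Matrix.add_mul, Matrix.mul_add, Matrix.mul_add]
      abel
    have hΔeq : Rhat₂ᵀ * Rhat₂ - A₁ᵀ * A₁ = A₁ᵀ * F + Fᵀ * A₁ + Fᵀ * F + E₁ + E₂ := by
      rw [← hchol, hGhat, hexp]
      abel
    have hΔb : spec (Rhat₂ᵀ * Rhat₂ - A₁ᵀ * A₁) ≤ γ₂ * S ^ 2 := by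
      rw [hΔeq]
      have b1 : spec (A₁ᵀ * F) ≤ S * (εF * S) := by
        calc spec (A₁ᵀ * F) ≤ spec A₁ᵀ * spec F := spec_mul_le _ _
          _ = S * spec F := by rw [spec_transpose, ← hS]
          _ ≤ S * (εF * S) := mul_le_mul_of_nonneg_left hFb hS_pos.le
      have b2 : spec (Fᵀ * A₁) ≤ (εF * S) * S := by
        calc spec (Fᵀ * A₁) ≤ spec Fᵀ * spec A₁ := spec_mul_le _ _
          _ = spec F * S := by rw [spec_transpose, ← hS]
          _ ≤ (εF * S) * S := mul_le_mul_of_nonneg_right hFb hS_pos.le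
      have b3 : spec (Fᵀ * F) ≤ (εF * S) * (εF * S) := by
        calc spec (Fᵀ * F) ≤ spec Fᵀ * spec F := spec_mul_le _ _
          _ = spec F * spec F := by rw [spec_transpose]
          _ ≤ (εF * S) * (εF * S) :=
              mul_le_mul hFb hFb (spec_nonneg _) (mul_nonneg hεF0 hS_pos.le)
      have c1 : spec (A₁ᵀ * F + Fᵀ * A₁ + Fᵀ * F + E₁ + E₂) ≤
          spec (A₁ᵀ * F) + spec (Fᵀ * A₁) + spec (Fᵀ * F) + spec E₁ + spec E₂ := by
        calc spec (A₁ᵀ * F + Fᵀ * A₁ + Fᵀ * F + E₁ + E₂)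
            ≤ spec (A₁ᵀ * F + Fᵀ * A₁ + Fᵀ * F + E₁) + spec E₂ := spec_add_le _ _
          _ ≤ spec (A₁ᵀ * F + Fᵀ * A₁ + Fᵀ * F) + spec E₁ + spec E₂ := by
              linarith [spec_add_le (A₁ᵀ * F + Fᵀ * A₁ + Fᵀ * F) E₁]
          _ ≤ spec (A₁ᵀ * F + Fᵀ * A₁) + spec (Fᵀ * F) + spec E₁ + spec E₂ := by
              linarith [spec_add_le (A₁ᵀ * F + Fᵀ * A₁) (Fᵀ * F)]
          _ ≤ spec (A₁ᵀ * F) + spec (Fᵀ * A₁) + spec (Fᵀ * F) + spec E₁ + spec E₂ := by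
              linarith [spec_add_le (A₁ᵀ * F) (Fᵀ * A₁)]
      calc spec (A₁ᵀ * F + Fᵀ * A₁ + Fᵀ * F + E₁ + E₂)
          ≤ spec (A₁ᵀ * F) + spec (Fᵀ * A₁) + spec (Fᵀ * F) + spec E₁ + spec E₂ := c1
        _ ≤ S * (εF * S) + (εF * S) * S + (εF * S) * (εF * S) +
            ε₁ * ((1 + εF) * S) ^ 2 + ε₂ * ((1 + ε₁) * ((1 + εF) * S) ^ 2) := by
            linarith [b1, b2, b3, hE₁b, hE₂b]
        _ = γ₂ * S ^ 2 := by rw [hγ₂]; ring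
    -- pointwise quadratic estimates
    have key : ∀ x : EuclideanSpace ℝ (Fin n),
        |‖CLMx Rhat₂ x‖ ^ 2 - ‖CLMx A₁ x‖ ^ 2| ≤ γ₂ * S ^ 2 * ‖x‖ ^ 2 := by
      intro x
      have h1 : ‖CLMx Rhat₂ x‖ ^ 2 - ‖CLMx A₁ x‖ ^ 2 =
          ⟪x, CLMx (Rhat₂ᵀ * Rhat₂ - A₁ᵀ * A₁) x⟫_ℝ := by
        rw [clm_sub, inner_sub_right, norm_clm_sq, norm_clm_sq]
      rw [h1]
      have h2 : |⟪x, CLMx (Rhat₂ᵀ * Rhat₂ - A₁ᵀ * A₁) x⟫_ℝ| ≤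
          ‖x‖ * ‖CLMx (Rhat₂ᵀ * Rhat₂ - A₁ᵀ * A₁) x‖ := abs_real_inner_le_norm _ _
      have h3 : ‖CLMx (Rhat₂ᵀ * Rhat₂ - A₁ᵀ * A₁) x‖ ≤
          spec (Rhat₂ᵀ * Rhat₂ - A₁ᵀ * A₁) * ‖x‖ := by
        rw [spec_eq_opNorm]
        exact (CLMx _).le_opNorm x
      have h4 : spec (Rhat₂ᵀ * Rhat₂ - A₁ᵀ * A₁) * ‖x‖ ≤ γ₂ * S ^ 2 * ‖x‖ :=
        mul_le_mul_of_nonneg_right hΔb (norm_nonneg _)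
      calc |⟪x, CLMx (Rhat₂ᵀ * Rhat₂ - A₁ᵀ * A₁) x⟫_ℝ|
          ≤ ‖x‖ * ‖CLMx (Rhat₂ᵀ * Rhat₂ - A₁ᵀ * A₁) x‖ := h2
        _ ≤ ‖x‖ * (γ₂ * S ^ 2 * ‖x‖) :=
            mul_le_mul_of_nonneg_left (le_trans h3 h4) (norm_nonneg _)
        _ = γ₂ * S ^ 2 * ‖x‖ ^ 2 := by ring
    -- upper bound for ‖Rhat₂ x‖
    have hup : ∀ x : EuclideanSpace ℝ (Fin n),
        ‖CLMx Rhat₂ x‖ ≤ (S * Real.sqrt (1 + γ₂)) * ‖x‖ := by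
      intro x
      have hA1x : ‖CLMx A₁ x‖ ≤ S * ‖x‖ := by
        have := (CLMx A₁).le_opNorm x
        rwa [← spec_eq_opNorm, ← hS] at this
      have hA1x2 : ‖CLMx A₁ x‖ ^ 2 ≤ S ^ 2 * ‖x‖ ^ 2 := by
        have := pow_le_pow_left₀ (norm_nonneg _) hA1x 2
        rwa [mul_pow] at this
      have h5 := (abs_le.mp (key x)).2
      apply le_of_sq_le_sq'' (norm_nonneg _) (by positivity)
      have hrw : ((S * Real.sqrt (1 + γ₂)) * ‖x‖) ^ 2 = S ^ 2 * (1 + γ₂) * ‖x‖ ^ 2 := by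
        rw [mul_pow, mul_pow, Real.sq_sqrt (by linarith : (0:ℝ) ≤ 1 + γ₂)]
      rw [hrw]
      linarith only [h5, hA1x2]
    have claim2 : spec Rhat₂ ^ 2 ≤ S ^ 2 * (1 + γ₂) := by
      have hb : spec Rhat₂ ≤ S * Real.sqrt (1 + γ₂) := by
        rw [spec_eq_opNorm]
        exact ContinuousLinearMap.opNorm_le_bound _ (by positivity) hup
      have := pow_le_pow_left₀ (spec_nonneg Rhat₂) hb 2
      rwa [mul_pow, Real.sq_sqrt (by linarith : (0:ℝ) ≤ 1 + γ₂)] at this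
    -- lower bound for ‖Rhat₂ x‖
    have h1t : 0 < 1 - kappa A₁ ^ 2 * γ₂ := by linarith
    have hS2 : S ^ 2 = kappa A₁ ^ 2 * s ^ 2 := by
      rw [hκ]; field_simp
    have hc_pos : 0 < s * Real.sqrt (1 - kappa A₁ ^ 2 * γ₂) :=
      mul_pos hs_pos (Real.sqrt_pos.mpr h1t)
    have hlow : ∀ x : EuclideanSpace ℝ (Fin n),
        (s * Real.sqrt (1 - kappa A₁ ^ 2 * γ₂)) * ‖x‖ ≤ ‖CLMx Rhat₂ x‖ := by
      intro x
      have hA1x : s * ‖x‖ ≤ ‖CLMx A₁ x‖ := sigmaMin_mul_le A₁ hn x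
      have hA1x2 : s ^ 2 * ‖x‖ ^ 2 ≤ ‖CLMx A₁ x‖ ^ 2 := by
        have := pow_le_pow_left₀ (mul_nonneg hs0 (norm_nonneg _)) hA1x 2
        rwa [mul_pow] at this
      have h5 := (abs_le.mp (key x)).1
      apply le_of_sq_le_sq'' (by positivity) (norm_nonneg _)
      have hrw : ((s * Real.sqrt (1 - kappa A₁ ^ 2 * γ₂)) * ‖x‖) ^ 2 =
          s ^ 2 * (1 - kappa A₁ ^ 2 * γ₂) * ‖x‖ ^ 2 := by
        rw [mul_pow, mul_pow, Real.sq_sqrt h1t.le]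
      rw [hrw]
      have h6 : γ₂ * S ^ 2 * ‖x‖ ^ 2 = kappa A₁ ^ 2 * γ₂ * (s ^ 2 * ‖x‖ ^ 2) := by
        rw [hS2]; ring
      linarith only [h5, hA1x2, h6]
    have claim1 : IsUnit Rhat₂.det := isUnit_det_of_lower hc_pos hlow
    have hRR : Rhat₂ * Rhat₂⁻¹ = 1 := Matrix.mul_nonsing_inv _ claim1
    -- bound for the inverse
    have hinvb : spec Rhat₂⁻¹ ≤ 1 / (s * Real.sqrt (1 - kappa A₁ ^ 2 * γ₂)) := by
      rw [spec_eq_opNorm]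
      apply ContinuousLinearMap.opNorm_le_bound _ (by positivity)
      intro y
      have h6 : CLMx Rhat₂ (CLMx Rhat₂⁻¹ y) = y := by
        rw [← clm_mul, hRR, clm_one]
      have h7 := hlow (CLMx Rhat₂⁻¹ y)
      rw [h6] at h7
      rw [one_div, inv_mul_eq_div, le_div_iff₀ hc_pos]
      linarith only [h7]
    have claim3 : spec Rhat₂⁻¹ ^ 2 ≤ ((sigmaMin A₁)⁻¹) ^ 2 / (1 - kappa A₁ ^ 2 * γ₂) := by
      have h9 := pow_le_pow_left₀ (spec_nonneg Rhat₂⁻¹) hinvb 2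
      have h10 : (1 / (s * Real.sqrt (1 - kappa A₁ ^ 2 * γ₂))) ^ 2 =
          ((sigmaMin A₁)⁻¹) ^ 2 / (1 - kappa A₁ ^ 2 * γ₂) := by
        rw [div_pow, mul_pow, Real.sq_sqrt h1t.le, one_pow, ← hsdef]
        field_simp
      rwa [h10] at h9
    -- condition number bound
    have hkR : kappa Rhat₂ = spec Rhat₂ / sigmaMin Rhat₂ := kappa_eq_div Rhat₂ hn
    obtain ⟨y₀, hy₀n, hy₀v⟩ := exists_sigmaMin Rhat₂ hn
    have hsRlow : s * Real.sqrt (1 - kappa A₁ ^ 2 * γ₂) ≤ sigmaMin Rhat₂ := by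
      have := hlow y₀
      rwa [hy₀n, mul_one, hy₀v] at this
    have claim4 : kappa Rhat₂ ≤ kappa A₁ * Real.sqrt ((1 + γ₂) / (1 - kappa A₁ ^ 2 * γ₂)) := by
      rw [hkR]
      have hspecb : spec Rhat₂ ≤ S * Real.sqrt (1 + γ₂) := by
        rw [spec_eq_opNorm]
        exact ContinuousLinearMap.opNorm_le_bound _ (by positivity) hup
      have hd1 : kappa Rhat₂ ≤ (S * Real.sqrt (1 + γ₂)) / (s * Real.sqrt (1 - kappa A₁ ^ 2 * γ₂)) := by
        rw [hkR]
        exact div_le_div₀ (by positivity) hspecb hc_pos hsRlow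
      have heq : (S * Real.sqrt (1 + γ₂)) / (s * Real.sqrt (1 - kappa A₁ ^ 2 * γ₂)) =
          kappa A₁ * Real.sqrt ((1 + γ₂) / (1 - kappa A₁ ^ 2 * γ₂)) := by
        rw [hκ, Real.sqrt_div (by linarith : (0:ℝ) ≤ 1 + γ₂)]
        rw [div_mul_div_comm]
      rw [← hkR]
      rw [heq] at hd1
      exact hd1
    exact ⟨claim1, claim2, claim3, claim4⟩
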